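/- Let I be a finite nonempty set, let α : ℕ → ℝ be a sequence with α_n > 0 for all n that is eventually nonincreasing (there is N₀ with α_{n+1} ≤ α_n for all n ≥ N₀), and suppose that for every x ∈ (0,1), sup_n α_{⌊xn⌋}/α_n < ∞. Let Y : ℕ → (nonempty subsets of I), define ν(n,i) := card{k < n : i ∈ Y_k}, and suppose there is Δ ∈ (0,1] such that liminf_{n→∞} ν(n,i)/n ≥ Δ for every i ∈ I. Then there exist a constant C ≥ 1 and an index N such that for all n ≥ N: α_{ν(n,i)} ≤ C·α_n for every i ∈ I, and Σ_{i∈Y_n} α_{ν(n,i)} ≥ α_n. -/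
import Mathlib


theorem stmt17 (I : Type*) [Fintype I] [Nonempty I] [DecidableEq I]
    (α : ℕ → ℝ) (hpos : ∀ n, 0 < α n)
    (N₀ : ℕ) (hmono : ∀ n, N₀ ≤ n → α (n + 1) ≤ α n)
    (hratio : ∀ x : ℝ, 0 < x → x < 1 → ∃ B : ℝ, ∀ n : ℕ, α ⌊x * n⌋₊ / α n ≤ B)
    (Y : ℕ → Finset I) (hY : ∀ n, (Y n).Nonempty)
    (Δ : ℝ) (hΔ : 0 < Δ) (hΔ1 : Δ ≤ 1)
    (hfreq : ∀ i : I, Δ ≤ Filter.liminf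
      (fun n : ℕ => ((((Finset.range n).filter fun k => i ∈ Y k).card : ℝ) / n))
      Filter.atTop) :
    ∃ C : ℝ, 1 ≤ C ∧ ∃ N : ℕ, ∀ n, N ≤ n →
      (∀ i : I, α (((Finset.range n).filter fun k => i ∈ Y k).card) ≤ C * α n) ∧
      α n ≤ ∑ i ∈ Y n, α (((Finset.range n).filter fun k => i ∈ Y k).card) := by
  set ν : ℕ → I → ℕ := fun n i => ((Finset.range n).filter fun k => i ∈ Y k).card with hνdef
  have hνle : ∀ n i, ν n i ≤ n := by
    intro n i
    simpa using Finset.card_filter_le (Finset.range n) (fun k => i ∈ Y k)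
  have key : ∀ m n : ℕ, N₀ ≤ m → m ≤ n → α n ≤ α m := by
    intro m n hm hmn
    induction n, hmn using Nat.le_induction with
    | base => exact le_refl _
    | succ n hn ih => exact (hmono n (hm.trans hn)).trans ih
  obtain ⟨B, hB⟩ := hratio (Δ / 2) (by linarith) (by linarith)
  have hcb : ∀ i : I, Filter.IsBoundedUnder (· ≥ ·) Filter.atTop
      (fun n : ℕ => ((ν n i : ℝ) / n)) := by
    intro i
    apply Filter.isBoundedUnder_of
    exact ⟨0, fun n => div_nonneg (Nat.cast_nonneg _) (Nat.cast_nonneg _)⟩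
  have h1 : ∀ᶠ n : ℕ in Filter.atTop, ∀ i : I, Δ / 2 < (ν n i : ℝ) / n :=
    Filter.eventually_all.2 fun i =>
      Filter.eventually_lt_of_lt_liminf (lt_of_lt_of_le (by linarith) (hfreq i)) (hcb i)
  have h2 : ∀ᶠ n : ℕ in Filter.atTop, N₀ ≤ ⌊Δ / 2 * (n : ℝ)⌋₊ := by
    have ht : Filter.Tendsto (fun n : ℕ => Δ / 2 * (n : ℝ)) Filter.atTop Filter.atTop :=
      Filter.Tendsto.const_mul_atTop (by linarith) tendsto_natCast_atTop_atTop
    exact (tendsto_nat_floor_atTop.comp ht).eventually_ge_atTop N₀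
  obtain ⟨N, hN⟩ := Filter.eventually_atTop.1 (h1.and h2)
  refine ⟨max B 1, le_max_right _ _, max N 1, fun n hn => ?_⟩
  have hn' : N ≤ n := le_trans (le_max_left _ _) hn
  have hn1 : 1 ≤ n := le_trans (le_max_right _ _) hn
  obtain ⟨hA, hF⟩ := hN n hn'
  have hnpos : (0 : ℝ) < n := by exact_mod_cast hn1
  -- floor ≤ ν n i for every i
  have hfl : ∀ i : I, ⌊Δ / 2 * (n : ℝ)⌋₊ ≤ ν n i := by
    intro i
    have : Δ / 2 * (n : ℝ) ≤ (ν n i : ℝ) := by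
      have := hA i
      rw [lt_div_iff₀ hnpos] at this
      linarith
    calc ⌊Δ / 2 * (n : ℝ)⌋₊ ≤ ⌊((ν n i : ℕ) : ℝ)⌋₊ := Nat.floor_le_floor this
      _ = ν n i := Nat.floor_natCast _
  constructor
  · intro i
    have h3 : α (ν n i) ≤ α ⌊Δ / 2 * (n : ℝ)⌋₊ := key _ _ hF (hfl i)
    have h4 : α ⌊Δ / 2 * (n : ℝ)⌋₊ ≤ B * α n := by
      have := hB n
      rw [div_le_iff₀ (hpos n)] at this
      exact this
    calc α (ν n i) ≤ B * α n := h3.trans h4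
      _ ≤ max B 1 * α n := by
        apply mul_le_mul_of_nonneg_right (le_max_left _ _) (hpos n).le
  · obtain ⟨i₀, hi₀⟩ := hY n
    have h5 : α n ≤ α (ν n i₀) := key _ _ (hF.trans (hfl i₀)) (hνle n i₀)
    calc α n ≤ α (ν n i₀) := h5
      _ ≤ ∑ i ∈ Y n, α (ν n i) :=
        Finset.single_le_sum (fun i _ => (hpos _).le) hi₀
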